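/- Let Δ_{n,L} be the block upper-bidiagonal matrix with diagonal blocks B_L and superdiagonal blocks −I_L. Then the cokernel ℤ^{nL}/Δ_{n,L}^T ℤ^{nL} is isomorphic as an abelian group to ℤ^L/B_L^n ℤ^L. -/

import Mathlib

/-- The block upper-bidiagonal matrix with diagonal blocks `B` and superdiagonal blocks `−I`. -/
def Delta (n L : ℕ) (B : Matrix (Fin L) (Fin L) ℤ) :
    Matrix (Fin n × Fin L) (Fin n × Fin L) ℤ := fun p q =>
  if p.1 = q.1 then B p.2 q.2
  else if (q.1 : ℕ) = (p.1 : ℕ) + 1 then (if p.2 = q.2 then -1 else 0)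
  else 0

open Matrix LinearMap


section Helpers

variable {ι : Type*} [Fintype ι] [DecidableEq ι]

lemma range_toLin'_mul_right (M V : Matrix ι ι ℤ) [Invertible V] :
    LinearMap.range (Matrix.toLin' (M * V)) = LinearMap.range (Matrix.toLin' M) := by
  rw [Matrix.toLin'_mul]
  exact LinearMap.range_comp_of_range_eq_top _
    (LinearMap.range_eq_top.mpr (Matrix.toLinearEquiv' V inferInstance).surjective)

lemma range_toLin'_mul_left (U M : Matrix ι ι ℤ) :
    LinearMap.range (Matrix.toLin' (U * M)) =
      (LinearMap.range (Matrix.toLin' M)).map (Matrix.toLin' U) := by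
  rw [Matrix.toLin'_mul, LinearMap.range_comp]

/-- cokernel equivalence from a left unimodular factor -/
noncomputable def cokerEquivOfLeftMul (U M : Matrix ι ι ℤ) [Invertible U] :
    ((ι → ℤ) ⧸ LinearMap.range (Matrix.toLin' M)) ≃ₗ[ℤ]
      ((ι → ℤ) ⧸ LinearMap.range (Matrix.toLin' (U * M))) :=
  Submodule.Quotient.equiv _ _ (Matrix.toLinearEquiv' U inferInstance)
    (by rw [range_toLin'_mul_left]; rfl)

end Helpers

lemma coker_transpose (L : ℕ) (A : Matrix (Fin L) (Fin L) ℤ) (hA : A.det ≠ 0) :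
    Nonempty (((Fin L → ℤ) ⧸ LinearMap.range (Matrix.toLin' Aᵀ)) ≃ₗ[ℤ]
      ((Fin L → ℤ) ⧸ LinearMap.range (Matrix.toLin' A))) := by
  classical
  -- injectivity of toLin' A
  have hinj : Function.Injective (Matrix.toLin' A) := by
    rw [← LinearMap.ker_eq_bot, Submodule.eq_bot_iff]
    intro v hv
    have hv' : A *ᵥ v = 0 := by simpa [Matrix.toLin'_apply] using hv
    have h2 : (A.adjugate * A) *ᵥ v = A.det • v := by
      rw [Matrix.adjugate_mul]; simp [Matrix.smul_mulVec]
    rw [← Matrix.mulVec_mulVec, hv', Matrix.mulVec_zero] at h2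
    funext i
    have := congrFun h2.symm i
    simpa [hA] using this
  set b : Module.Basis (Fin L) ℤ (Fin L → ℤ) := Pi.basisFun ℤ (Fin L) with hb
  set N : Submodule ℤ (Fin L → ℤ) := LinearMap.range (Matrix.toLin' A) with hN
  -- basis of N coming from the columns of A
  let d : Module.Basis (Fin L) ℤ N := b.map (LinearEquiv.ofInjective (Matrix.toLin' A) hinj)
  obtain ⟨m, snf⟩ := N.smithNormalForm b
  obtain ⟨b', c, f, a, hsnf⟩ := snf
  have hm : m = L := by
    have e := c.indexEquiv d
    simpa using (Fintype.card_congr e)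
  subst hm
  have fbij : Function.Bijective f := (Finite.injective_iff_bijective).mp f.injective
  -- the permutation matrix
  set σ : Equiv.Perm (Fin m) := Equiv.ofBijective f fbij with hσ
  set Pσ : Matrix (Fin m) (Fin m) ℤ := (σ.symm.toPEquiv).toMatrix with hPσ
  have hPσ_entry : ∀ r i, Pσ r i = if r = f i then (1:ℤ) else 0 := by
    intro r i
    rw [hPσ, PEquiv.toMatrix_apply]
    congr 1
    simp only [Equiv.toPEquiv_apply, Option.mem_def, Option.some.injEq, eq_iff_iff]
    constructor
    · rintro rfl
      exact (Equiv.ofBijective_apply_symm_apply _ fbij r).symm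
    · rintro rfl
      exact Equiv.ofBijective_symm_apply_apply _ fbij i
  have hPs : Invertible Pσ := by
    refine ⟨(σ.toPEquiv).toMatrix, ?_, ?_⟩
    · rw [hPσ, ← PEquiv.toMatrix_trans, ← Equiv.toPEquiv_trans]
      simp [PEquiv.toMatrix_refl]
    · rw [hPσ, ← PEquiv.toMatrix_trans, ← Equiv.toPEquiv_trans]
      simp [PEquiv.toMatrix_refl]
  -- the diagonal-permuted matrix
  set D : Matrix (Fin m) (Fin m) ℤ := Matrix.of (fun r i => if r = f i then a i else 0) with hD
  have hDfact : D = Pσ * Matrix.diagonal a := by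
    ext r i
    rw [Matrix.mul_apply]
    simp only [hPσ_entry, Matrix.diagonal_apply, hD, Matrix.of_apply, ite_mul, one_mul, zero_mul]
    rw [Finset.sum_eq_single i]
    · simp
    · intro x _ hx; simp [hx, if_neg (Ne.symm hx)]
    · simp
  have hDTfact : Dᵀ = Matrix.diagonal a * Pσᵀ := by
    ext i r
    rw [Matrix.mul_apply]
    simp only [Matrix.transpose_apply, hPσ_entry, Matrix.diagonal_apply, hD, Matrix.of_apply,
      mul_ite, mul_one, mul_zero]
    rw [Finset.sum_eq_single i]
    · simp
    · intro x _ hx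
      split_ifs with h1 h2 <;> first | rfl | exact absurd h2.symm hx
    · simp
  -- the change-of-basis matrices
  set P : Matrix (Fin m) (Fin m) ℤ := b.toMatrix b' with hP
  have hPinv : Invertible P := b.invertibleToMatrix b'
  set W : Matrix (Fin m) (Fin m) ℤ := d.toMatrix c with hW
  have hWinv : Invertible W := d.invertibleToMatrix c
  -- key identity A * W = P * D
  have hkey : A * W = P * D := by
    ext r i
    have h1 : (A * W) r i = ((c i : Fin m → ℤ)) r := by
      rw [Matrix.mul_apply]
      have hc : ((c i : Fin m → ℤ)) = ∑ j, d.repr (c i) j • ((d j : Fin m → ℤ)) := by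
        conv_lhs => rw [← d.sum_repr (c i)]
        simp only [Submodule.coe_sum, Submodule.coe_smul]
      rw [hc]
      rw [Finset.sum_apply]
      refine Finset.sum_congr rfl fun j _ => ?_
      have hdj : ((d j : Fin m → ℤ)) = A *ᵥ Pi.single j 1 := by
        have h0 : (d j : Fin m → ℤ) =
            Matrix.toLin' A ((Pi.basisFun ℤ (Fin m)) j) := by
          simp only [d, Module.Basis.map_apply, hb]
          exact LinearEquiv.ofInjective_apply (Matrix.toLin' A) _
        rw [h0, Matrix.toLin'_apply, Pi.basisFun_apply]
      rw [Pi.smul_apply, hdj, Matrix.mulVec_single_one]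
      rw [hW, Module.Basis.toMatrix_apply]
      simp [mul_comm]
    have h2 : (P * D) r i = ((c i : Fin m → ℤ)) r := by
      rw [Matrix.mul_apply, hsnf i]
      simp only [hD, Matrix.of_apply, mul_ite, mul_zero]
      rw [Finset.sum_eq_single (f i)]
      · simp only [if_pos rfl, Pi.smul_apply, smul_eq_mul]
        rw [hP, Module.Basis.toMatrix_apply]
        simp [hb, mul_comm]
      · intro x _ hx; rw [if_neg hx]
      · simp
    rw [h1, h2]
  have hAfact : A = P * D * ⅟W := by
    calc A = A * W * ⅟W := by rw [mul_invOf_cancel_right]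
    _ = P * D * ⅟W := by rw [hkey]
  -- range computations
  have hrangeA : LinearMap.range (Matrix.toLin' A) =
      (LinearMap.range (Matrix.toLin' (Matrix.diagonal a))).map (Matrix.toLin' (P * Pσ)) := by
    conv_lhs => rw [hAfact]
    rw [range_toLin'_mul_right (P * D) (⅟W), hDfact, ← Matrix.mul_assoc,
      range_toLin'_mul_left]
  have hrangeAT : LinearMap.range (Matrix.toLin' Aᵀ) =
      (LinearMap.range (Matrix.toLin' (Matrix.diagonal a))).map (Matrix.toLin' ((⅟W)ᵀ)) := by
    have : Aᵀ = (⅟W)ᵀ * Matrix.diagonal a * (Pσᵀ * Pᵀ) := by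
      rw [hAfact]
      rw [Matrix.transpose_mul, Matrix.transpose_mul, hDTfact]
      noncomm_ring
    rw [this, Matrix.mul_assoc, ← Matrix.mul_assoc]
    have h1 : Invertible (Pσᵀ) := Pσ.invertibleTranspose
    have h2 : Invertible (Pᵀ) := P.invertibleTranspose
    have : Invertible (Pσᵀ * Pᵀ) := invertibleMul _ _
    rw [range_toLin'_mul_right _ (Pσᵀ * Pᵀ), range_toLin'_mul_left]
  -- assemble
  have hWT : Invertible ((⅟W)ᵀ) := (⅟W).invertibleTranspose
  have hPPσ : Invertible (P * Pσ) := invertibleMul _ _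
  have e1 : ((Fin m → ℤ) ⧸ LinearMap.range (Matrix.toLin' (Matrix.diagonal a))) ≃ₗ[ℤ]
      ((Fin m → ℤ) ⧸ LinearMap.range (Matrix.toLin' Aᵀ)) :=
    Submodule.Quotient.equiv _ _ (Matrix.toLinearEquiv' ((⅟W)ᵀ) hWT)
      (by rw [hrangeAT]; rfl)
  have e2 : ((Fin m → ℤ) ⧸ LinearMap.range (Matrix.toLin' (Matrix.diagonal a))) ≃ₗ[ℤ]
      ((Fin m → ℤ) ⧸ N) :=
    Submodule.Quotient.equiv _ _ (Matrix.toLinearEquiv' (P * Pσ) hPPσ)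
      (by rw [hN, hrangeA]; rfl)
  exact ⟨e1.symm.trans e2⟩

-- sum over Fin n

lemma fin_sum_ite {M : Type*} [AddCommMonoid M] (n k : ℕ) (g : Fin n → M) :
    (∑ i : Fin n, if (i : ℕ) = k then g i else 0) =
      if h : k < n then g ⟨k, h⟩ else 0 := by
  by_cases h : k < n
  · rw [dif_pos h, Finset.sum_eq_single (⟨k, h⟩ : Fin n)]
    · simp
    · intro b _ hb
      rw [if_neg]
      simpa [Fin.ext_iff] using hb
    · simp
  · rw [dif_neg h, Finset.sum_eq_zero]
    intro i _
    rw [if_neg]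
    exact fun hik => h (hik ▸ i.isLt)

lemma deltaT_mulVec (n L : ℕ) (B : Matrix (Fin L) (Fin L) ℤ)
    (z : Fin n × Fin L → ℤ) (i : Fin n) (c : Fin L) :
    (Delta n L B)ᵀ.mulVec z (i, c) =
      (Bᵀ *ᵥ (fun d => z (i, d))) c -
        ∑ j : Fin n, (if (i : ℕ) = (j : ℕ) + 1 then z (j, c) else 0) := by
  have key : ∀ j : Fin n, (∑ d : Fin L, (Delta n L B) (j, d) (i, c) * z (j, d))
      = (if (j : Fin n) = i then (Bᵀ *ᵥ fun d => z (i, d)) c else 0)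
        - (if (i : ℕ) = (j : ℕ) + 1 then z (j, c) else 0) := by
    intro j
    by_cases hji : j = i
    · subst hji
      rw [if_pos rfl, if_neg (by omega)]
      simp only [Delta, if_pos rfl, sub_zero, Matrix.mulVec, dotProduct,
        Matrix.transpose_apply]
      simp
    · rw [if_neg hji]
      by_cases hsucc : (i : ℕ) = (j : ℕ) + 1
      · rw [if_pos hsucc, zero_sub]
        have : ∀ d : Fin L, (Delta n L B) (j, d) (i, c) * z (j, d)
            = (if d = c then -z (j, d) else 0) := by
          intro d
          simp only [Delta]
          rw [if_neg (by simpa using hji), if_pos hsucc]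
          split_ifs <;> ring
        rw [Finset.sum_congr rfl (fun d _ => this d)]
        simp
      · rw [if_neg hsucc, sub_zero]
        apply Finset.sum_eq_zero
        intro d _
        simp only [Delta]
        rw [if_neg (by simpa using hji), if_neg hsucc, zero_mul]
  rw [Matrix.mulVec, dotProduct]
  rw [Fintype.sum_prod_type]
  simp only [Matrix.transpose_apply]
  rw [Finset.sum_congr rfl (fun j _ => key j), Finset.sum_sub_distrib]
  congr 1
  rw [Finset.sum_ite_eq' Finset.univ i]
  simp

noncomputable def phi (n L : ℕ) (B : Matrix (Fin L) (Fin L) ℤ) :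
    ((Fin n × Fin L) → ℤ) →ₗ[ℤ] (Fin L → ℤ) :=
  ∑ i : Fin n, (Matrix.toLin' ((B ^ (i : ℕ))ᵀ)).comp (LinearMap.funLeft ℤ ℤ (fun c => (i, c)))

lemma phi_apply (n L : ℕ) (B : Matrix (Fin L) (Fin L) ℤ) (x : Fin n × Fin L → ℤ) :
    phi n L B x = ∑ i : Fin n, ((B ^ (i : ℕ))ᵀ) *ᵥ (fun c => x (i, c)) := by
  simp [phi, LinearMap.sum_apply, Matrix.toLin'_apply, LinearMap.funLeft_apply]
  refine Finset.sum_congr rfl fun i _ => ?_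
  rw [← Matrix.toLin'_pow, Matrix.toLin'_apply]
  rfl

lemma mulVec_sum' {L : ℕ} {ι : Type*} (s : Finset ι) (M : Matrix (Fin L) (Fin L) ℤ)
    (v : ι → (Fin L → ℤ)) : M *ᵥ (∑ k ∈ s, v k) = ∑ k ∈ s, M *ᵥ (v k) :=
  map_sum M.mulVecLin v s

lemma phi_deltaT (n L : ℕ) (hn : 1 ≤ n) (B : Matrix (Fin L) (Fin L) ℤ)
    (z : Fin n × Fin L → ℤ) :
    phi n L B ((Delta n L B)ᵀ.mulVec z) =
      ((B ^ n)ᵀ) *ᵥ (fun d => z (⟨n - 1, by omega⟩, d)) := by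
  rw [phi_apply]
  have block : ∀ i : Fin n, (fun c => (Delta n L B)ᵀ.mulVec z (i, c))
      = (Bᵀ *ᵥ fun d => z (i, d)) -
          ∑ j : Fin n, (if (i : ℕ) = (j : ℕ) + 1 then (fun c => z (j, c)) else 0) := by
    intro i; funext c
    rw [deltaT_mulVec]
    simp only [Pi.sub_apply, Finset.sum_apply]
    congr 1
    exact Finset.sum_congr rfl (fun j _ => by split_ifs <;> rfl)
  calc
    ∑ i : Fin n, ((B ^ (i : ℕ))ᵀ) *ᵥ (fun c => (Delta n L B)ᵀ.mulVec z (i, c))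
      = ∑ i : Fin n, (((B ^ ((i : ℕ) + 1))ᵀ) *ᵥ (fun d => z (i, d))
          - ∑ j : Fin n, (if (i : ℕ) = (j : ℕ) + 1 then ((B ^ (i : ℕ))ᵀ) *ᵥ (fun d => z (j, d)) else 0)) := by
        refine Finset.sum_congr rfl fun i _ => ?_
        rw [block i, Matrix.mulVec_sub, mulVec_sum']
        congr 1
        · rw [Matrix.mulVec_mulVec, ← Matrix.transpose_mul, ← pow_succ']
        · refine Finset.sum_congr rfl fun j _ => ?_
          rw [apply_ite (fun v => ((B ^ (i : ℕ))ᵀ) *ᵥ v), Matrix.mulVec_zero]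
    _ = ∑ i : Fin n, ((B ^ ((i : ℕ) + 1))ᵀ) *ᵥ (fun d => z (i, d))
        - ∑ j : Fin n, (if h : (j : ℕ) + 1 < n then ((B ^ ((j : ℕ) + 1))ᵀ) *ᵥ (fun d => z (j, d)) else 0) := by
        rw [Finset.sum_sub_distrib]
        congr 1
        rw [Finset.sum_comm]
        refine Finset.sum_congr rfl fun j _ => ?_
        exact fin_sum_ite n ((j : ℕ) + 1) (fun i => ((B ^ (i : ℕ))ᵀ) *ᵥ (fun d => z (j, d)))
    _ = ∑ i : Fin n, (if ((i : ℕ) + 1 < n) then 0 else ((B ^ ((i : ℕ) + 1))ᵀ) *ᵥ (fun d => z (i, d))) := by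
        rw [← Finset.sum_sub_distrib]
        refine Finset.sum_congr rfl fun i _ => ?_
        by_cases h : (i : ℕ) + 1 < n
        · rw [dif_pos h, if_pos h, sub_self]
        · rw [dif_neg h, if_neg h, sub_zero]
    _ = ((B ^ n)ᵀ) *ᵥ (fun d => z (⟨n - 1, by omega⟩, d)) := by
        rw [Finset.sum_eq_single (⟨n - 1, by omega⟩ : Fin n)]
        · have hval : ((⟨n - 1, by omega⟩ : Fin n) : ℕ) = n - 1 := rfl
          rw [if_neg (by rw [hval]; omega)]
          have hexp : n - 1 + 1 = n := by omega
          rw [show ((⟨n - 1, by omega⟩ : Fin n) : ℕ) + 1 = n by rw [hval, hexp]]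
        · intro b _ hb
          have hbv : (b : ℕ) ≠ n - 1 := fun hc => hb (Fin.ext hc)
          rw [if_pos (by have := b.isLt; omega)]
        · simp

lemma exists_preimage (n L : ℕ) (hn : 1 ≤ n) (B : Matrix (Fin L) (Fin L) ℤ)
    (x : Fin n × Fin L → ℤ) (y : Fin L → ℤ)
    (hy : phi n L B x = ((B ^ n)ᵀ) *ᵥ y) :
    ∃ z : Fin n × Fin L → ℤ, (Delta n L B)ᵀ.mulVec z = x := by
  classical
  set xk : Fin n → (Fin L → ℤ) := fun k => (fun d => x (k, d)) with hxk
  set zf : ℕ → (Fin L → ℤ) := fun m =>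
    ((B ^ (n - 1 - m))ᵀ *ᵥ y)
      - ∑ k : Fin n, (if m < (k : ℕ) then (B ^ ((k : ℕ) - 1 - m))ᵀ *ᵥ xk k else 0) with hzf
  refine ⟨fun p => zf (p.1 : ℕ) p.2, ?_⟩
  -- step A : multiplication by Bᵀ
  have stepA : ∀ i : Fin n, Bᵀ *ᵥ zf (i : ℕ) =
      ((B ^ (n - (i : ℕ)))ᵀ *ᵥ y)
        - ∑ k : Fin n, (if (i : ℕ) < (k : ℕ) then (B ^ ((k : ℕ) - (i : ℕ)))ᵀ *ᵥ xk k else 0) := by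
    intro i
    rw [hzf]
    rw [Matrix.mulVec_sub, mulVec_sum']
    congr 1
    · rw [Matrix.mulVec_mulVec, ← Matrix.transpose_mul, ← pow_succ]
      have hgoal : n - 1 - (i : ℕ) + 1 = n - (i : ℕ) := by have := i.isLt; omega
      rw [hgoal]
    · refine Finset.sum_congr rfl fun k _ => ?_
      by_cases hik : (i : ℕ) < (k : ℕ)
      · have hgoal : (k : ℕ) - 1 - (i : ℕ) + 1 = (k : ℕ) - (i : ℕ) := by omega
        rw [if_pos hik, if_pos hik, Matrix.mulVec_mulVec, ← Matrix.transpose_mul, ← pow_succ,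
          hgoal]
      · rw [if_neg hik, if_neg hik, Matrix.mulVec_zero]
  -- the main pointwise identity
  have main : ∀ i : Fin n, Bᵀ *ᵥ zf (i : ℕ) -
      (∑ j : Fin n, (if (i : ℕ) = (j : ℕ) + 1 then zf (j : ℕ) else 0)) = xk i := by
    intro i
    rw [stepA i]
    by_cases h0 : (i : ℕ) = 0
    · have hzero : (∑ j : Fin n, (if (i : ℕ) = (j : ℕ) + 1 then zf (j : ℕ) else 0)) = 0 := by
        apply Finset.sum_eq_zero
        intro j _
        rw [if_neg (by omega)]
      rw [hzero, sub_zero, h0]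
      have hphi : (B ^ n)ᵀ *ᵥ y = ∑ k : Fin n, (B ^ (k : ℕ))ᵀ *ᵥ xk k := by
        rw [← hy, phi_apply]
      have hn0 : n - 0 = n := rfl
      rw [hn0, hphi, ← Finset.sum_sub_distrib]
      rw [Finset.sum_eq_single (⟨0, by omega⟩ : Fin n)]
      · rw [if_neg (by simp)]
        have : ((⟨0, by omega⟩ : Fin n) : ℕ) = 0 := rfl
        rw [sub_zero, this, pow_zero, Matrix.transpose_one, Matrix.one_mulVec]
        have heq : (⟨0, by omega⟩ : Fin n) = i := Fin.ext (this.trans h0.symm)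
        rw [heq]
      · intro b _ hb
        have hbv : (b : ℕ) ≠ 0 := fun hc => hb (Fin.ext hc)
        rw [if_pos (by omega)]
        rw [Nat.sub_zero, sub_self]
      · simp
    · -- i ≥ 1
      have hi1 : 1 ≤ (i : ℕ) := by omega
      have hilt := i.isLt
      have hsum2 : (∑ j : Fin n, (if (i : ℕ) = (j : ℕ) + 1 then zf (j : ℕ) else 0))
          = zf ((i : ℕ) - 1) := by
        have : ∀ j : Fin n, (if (i : ℕ) = (j : ℕ) + 1 then zf (j : ℕ) else 0)
            = (if (j : ℕ) = (i : ℕ) - 1 then zf ((j : ℕ)) else 0) := by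
          intro j
          rcases Nat.lt_or_ge ((j : ℕ)) ((i : ℕ) - 1) with h | h
          · rw [if_neg (by omega), if_neg (by omega)]
          · rcases Nat.lt_or_ge ((i : ℕ) - 1) ((j : ℕ)) with h' | h'
            · rw [if_neg (by omega), if_neg (by omega)]
            · have : (j : ℕ) = (i : ℕ) - 1 := by omega
              rw [if_pos (by omega), if_pos this]
        rw [Finset.sum_congr rfl (fun j _ => this j)]
        rw [fin_sum_ite n ((i : ℕ) - 1) (fun j => zf (j : ℕ))]
        rw [dif_pos (by omega)]
      rw [hsum2, hzf]
      simp only []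
      have he1 : n - 1 - ((i : ℕ) - 1) = n - (i : ℕ) := by omega
      rw [he1]
      have hexp : ∀ k : Fin n, (if (i : ℕ) - 1 < (k : ℕ) then (B ^ ((k : ℕ) - 1 - ((i : ℕ) - 1)))ᵀ *ᵥ xk k else 0)
          = (if (i : ℕ) - 1 < (k : ℕ) then (B ^ ((k : ℕ) - (i : ℕ)))ᵀ *ᵥ xk k else 0) := by
        intro k
        by_cases hk : (i : ℕ) - 1 < (k : ℕ)
        · have hg : (k : ℕ) - 1 - ((i : ℕ) - 1) = (k : ℕ) - (i : ℕ) := by omega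
          rw [if_pos hk, if_pos hk, hg]
        · rw [if_neg hk, if_neg hk]
      rw [Finset.sum_congr rfl (fun k _ => hexp k)]
      have final : ∀ (u : Fin L → ℤ) (S T : Fin L → ℤ), (u - S) - (u - T) = T - S := by
        intro u S T; abel
      rw [final]
      rw [← Finset.sum_sub_distrib]
      have hterm : ∀ k : Fin n, ((if (i : ℕ) - 1 < (k : ℕ) then (B ^ ((k : ℕ) - (i : ℕ)))ᵀ *ᵥ xk k else 0)
          - (if (i : ℕ) < (k : ℕ) then (B ^ ((k : ℕ) - (i : ℕ)))ᵀ *ᵥ xk k else 0))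
          = (if (k : ℕ) = (i : ℕ) then (B ^ ((k : ℕ) - (i : ℕ)))ᵀ *ᵥ xk k else 0) := by
        intro k
        rcases Nat.lt_or_ge ((k : ℕ)) ((i : ℕ)) with h | h
        · rw [if_neg (by omega), if_neg (by omega), if_neg (by omega), sub_zero]
        · rcases Nat.lt_or_ge ((i : ℕ)) ((k : ℕ)) with h' | h'
          · rw [if_pos (by omega), if_pos h', if_neg (by omega), sub_self]
          · have hk : (k : ℕ) = (i : ℕ) := by omega
            rw [if_pos (by omega), if_neg (by omega), if_pos hk, sub_zero]
      rw [Finset.sum_congr rfl (fun k _ => hterm k)]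
      rw [Finset.sum_eq_single i]
      · rw [if_pos rfl, Nat.sub_self, pow_zero, Matrix.transpose_one, Matrix.one_mulVec]
      · intro b _ hb
        rw [if_neg (fun hc => hb (Fin.ext hc))]
      · simp
  funext p
  obtain ⟨i, c⟩ := p
  rw [deltaT_mulVec]
  have h1 : (fun d => zf ((i : ℕ)) d) = zf ((i : ℕ)) := rfl
  have h2 : (∑ j : Fin n, (if (i : ℕ) = (j : ℕ) + 1 then zf ((j : ℕ)) c else 0))
      = (∑ j : Fin n, (if (i : ℕ) = (j : ℕ) + 1 then zf ((j : ℕ)) else 0)) c := by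
    rw [Finset.sum_apply]
    refine Finset.sum_congr rfl fun j _ => ?_
    split_ifs <;> rfl
  calc (Bᵀ *ᵥ fun d => zf ((i : ℕ)) d) c - ∑ j : Fin n, (if (i : ℕ) = (j : ℕ) + 1 then zf ((j : ℕ)) c else 0)
      = (Bᵀ *ᵥ zf ((i : ℕ))) c -
        (∑ j : Fin n, (if (i : ℕ) = (j : ℕ) + 1 then zf ((j : ℕ)) else 0)) c := by rw [h2]
    _ = (Bᵀ *ᵥ zf ((i : ℕ)) - ∑ j : Fin n, (if (i : ℕ) = (j : ℕ) + 1 then zf ((j : ℕ)) else 0)) c := rfl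
    _ = xk i c := by rw [main i]

lemma phi_surjective (n L : ℕ) (hn : 1 ≤ n) (B : Matrix (Fin L) (Fin L) ℤ) :
    Function.Surjective (phi n L B) := by
  intro v
  refine ⟨fun p => if p.1 = (⟨0, hn⟩ : Fin n) then v p.2 else 0, ?_⟩
  rw [phi_apply]
  have hite : ∀ i : Fin n, (fun c => if i = (⟨0, hn⟩ : Fin n) then v c else 0)
      = (if i = (⟨0, hn⟩ : Fin n) then v else 0) := by
    intro i; funext c; split_ifs <;> rfl
  calc ∑ i : Fin n, (B ^ (i : ℕ))ᵀ *ᵥ (fun c => if i = (⟨0, hn⟩ : Fin n) then v c else 0)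
      = ∑ i : Fin n, (if i = (⟨0, hn⟩ : Fin n) then (B ^ (i : ℕ))ᵀ *ᵥ v else 0) := by
        refine Finset.sum_congr rfl fun i _ => ?_
        rw [hite i, apply_ite (fun w => (B ^ (i : ℕ))ᵀ *ᵥ w), Matrix.mulVec_zero]
    _ = v := by
        rw [Finset.sum_ite_eq' Finset.univ (⟨0, hn⟩ : Fin n)]
        simp

theorem cokernel_Delta (n L : ℕ) (hn : 1 ≤ n) (B : Matrix (Fin L) (Fin L) ℤ)
    (hB : B.det ≠ 0) :
    Nonempty
      (((Fin n × Fin L → ℤ) ⧸ LinearMap.range (Matrix.toLin' (Delta n L B).transpose)) ≃+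
        ((Fin L → ℤ) ⧸ LinearMap.range (Matrix.toLin' (B ^ n)))) := by
  classical
  set p := LinearMap.range (Matrix.toLin' (Delta n L B).transpose) with hp
  set q := LinearMap.range (Matrix.toLin' ((B ^ n)ᵀ)) with hq
  have hle : p ≤ Submodule.comap (phi n L B) q := by
    rintro _ ⟨z, rfl⟩
    rw [Submodule.mem_comap, hq, LinearMap.mem_range]
    exact ⟨fun d => z (⟨n - 1, by omega⟩, d),
      by rw [Matrix.toLin'_apply, Matrix.toLin'_apply]; exact (phi_deltaT n L hn B z).symm⟩
  have hge : Submodule.comap (phi n L B) q ≤ p := by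
    intro x hx
    rw [Submodule.mem_comap, hq, LinearMap.mem_range] at hx
    obtain ⟨y, hy⟩ := hx
    obtain ⟨z, hz⟩ := exists_preimage n L hn B x y (by rw [← hy, Matrix.toLin'_apply])
    exact ⟨z, by rw [Matrix.toLin'_apply, hz]⟩
  set ψ := Submodule.mapQ p q (phi n L B) hle with hψ
  have hinj : Function.Injective ψ := by
    rw [← LinearMap.ker_eq_bot]
    rw [LinearMap.ker_eq_bot']
    intro u hu
    obtain ⟨x, rfl⟩ := Submodule.Quotient.mk_surjective p u
    rw [hψ, Submodule.mapQ_apply, Submodule.Quotient.mk_eq_zero] at hu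
    rw [Submodule.Quotient.mk_eq_zero]
    exact hge hu
  have hsurj : Function.Surjective ψ := by
    intro w
    obtain ⟨v, rfl⟩ := Submodule.Quotient.mk_surjective q w
    obtain ⟨x, hx⟩ := phi_surjective n L hn B v
    exact ⟨Submodule.Quotient.mk x, by rw [hψ, Submodule.mapQ_apply, hx]⟩
  have e1 := LinearEquiv.ofBijective ψ ⟨hinj, hsurj⟩
  obtain ⟨e2⟩ := coker_transpose L (B ^ n)
    (by rw [Matrix.det_pow]; exact pow_ne_zero _ hB)
  exact ⟨(e1.trans e2).toAddEquiv⟩
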